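/- Let k ≥ 4 with k ≠ 5, and let L be any nonempty loopless directed graph on r vertices. Then f(C_k, L) ≥ 2k/3, where f(C_k, L) = max{ k(1 − |E(L)|/r²), k − disc_{C_k}(L) }. Specifically: if L contains a directed 2-cycle then f(C_k,L) = k; if L is an orientation containing a directed path of length 3 then disc_{C_k}(L) ≤ ⌈k/4⌉ and hence f(C_k,L) ≥ k − ⌈k/4⌉ ≥ 2k/3; otherwise the underlying undirected graph of L is K_4-free, so |E(L)| ≤ r²/3 and f(C_k,L) ≥ 2k/3. -/

import Mathlib

open Finset

lemma disc_le_bad (k r : ℕ) [NeZero k]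
    (LA : Finset (Fin r × Fin r)) (d : ℕ)
    (hd : IsLeast {m | ∃ F : Finset ((Fin r × ℕ) × (Fin r × ℕ)), F.card = m ∧
      ∃ v : ZMod k → Fin r × ℕ, Function.Injective v ∧
        ∀ i : ZMod k, ((v i).1, (v (i + 1)).1) ∈ LA ∨ (v i, v (i + 1)) ∈ F} d)
    (w : ZMod k → Fin r) :
    d ≤ (univ.filter (fun i : ZMod k => (w i, w (i+1)) ∉ LA)).card := by
  set v : ZMod k → Fin r × ℕ := fun i => (w i, i.val) with hv
  have hvinj : Function.Injective v := by
    intro i j h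
    exact ZMod.val_injective k (congrArg Prod.snd h)
  set F := (univ.filter (fun i : ZMod k => (w i, w (i+1)) ∉ LA)).image
      (fun i => (v i, v (i+1))) with hF
  have hmem : F.card ∈ {m | ∃ F : Finset ((Fin r × ℕ) × (Fin r × ℕ)), F.card = m ∧
      ∃ v : ZMod k → Fin r × ℕ, Function.Injective v ∧
        ∀ i : ZMod k, ((v i).1, (v (i + 1)).1) ∈ LA ∨ (v i, v (i + 1)) ∈ F} := by
    refine ⟨F, rfl, v, hvinj, fun i => ?_⟩
    by_cases hi : (w i, w (i+1)) ∈ LA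
    · exact Or.inl hi
    · exact Or.inr (mem_image_of_mem _ (by simp [hi]))
  exact (hd.2 hmem).trans card_image_le

theorem stmt_19 (k r : ℕ) (hk : 4 ≤ k) (hk5 : k ≠ 5)
    (LA : Finset (Fin r × Fin r)) (hLne : LA.Nonempty)
    (hLloop : ∀ i : Fin r, (i, i) ∉ LA)
    (d : ℕ)
    (hd : IsLeast {m | ∃ F : Finset ((Fin r × ℕ) × (Fin r × ℕ)), F.card = m ∧
      ∃ v : ZMod k → Fin r × ℕ, Function.Injective v ∧
        ∀ i : ZMod k, ((v i).1, (v (i + 1)).1) ∈ LA ∨ (v i, v (i + 1)) ∈ F} d) :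
    (2 * (k : ℝ)) / 3 ≤
      max ((k : ℝ) * (1 - (LA.card : ℝ) / (r : ℝ) ^ 2)) ((k : ℝ) - (d : ℝ)) := by
  haveI : NeZero k := ⟨by omega⟩
  by_cases h3 : ∃ a b c u : Fin r, (a, b) ∈ LA ∧ (b, c) ∈ LA ∧ (c, u) ∈ LA
  · -- there is a directed walk of length 3: use the right branch of the max
    obtain ⟨a, b, c, u, hab, hbc, hcu⟩ := h3
    set w : ZMod k → Fin r := fun i =>
      if i.val % 4 = 0 then a else if i.val % 4 = 1 then b
      else if i.val % 4 = 2 then c else u with hw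
    have hval1 : ∀ i : ZMod k, i.val + 1 < k → (i+1).val = i.val + 1 := by
      intro i h
      have h1 : (1 : ZMod k).val = 1 := by rw [ZMod.val_one_eq_one_mod]; exact Nat.mod_eq_of_lt (by omega)
      have hlt2 : i.val + (1 : ZMod k).val < k := by rw [h1]; omega
      have := ZMod.val_add_of_lt hlt2
      rw [h1] at this; exact this
    have hgood : ∀ i : ZMod k, i.val % 4 ≠ 3 → i.val ≠ k - 1 → (w i, w (i+1)) ∈ LA := by
      intro i h4 hlast
      have hlt := ZMod.val_lt i
      have hstep : (i+1).val = i.val + 1 := hval1 i (by omega)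
      rcases (show i.val % 4 = 0 ∨ i.val % 4 = 1 ∨ i.val % 4 = 2 by omega) with h | h | h
      · have h' : (i.val + 1) % 4 = 1 := by omega
        simpa [hw, hstep, h, h'] using hab
      · have h' : (i.val + 1) % 4 = 2 := by omega
        simpa [hw, hstep, h, h'] using hbc
      · have h' : (i.val + 1) % 4 = 3 := by omega
        simpa [hw, hstep, h, h'] using hcu
    have hcard : (univ.filter (fun i : ZMod k => (w i, w (i+1)) ∉ LA)).card ≤
        ((range k).filter (fun j => j % 4 = 3 ∨ j = k - 1)).card := by
      apply card_le_card_of_injOn (fun i => i.val)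
      · intro i hi
        simp only [mem_coe, mem_filter, mem_univ, true_and] at hi
        simp only [mem_coe, mem_filter, mem_range]
        refine ⟨ZMod.val_lt i, ?_⟩
        by_contra hcon
        push_neg at hcon
        exact hi (hgood i hcon.1 hcon.2)
      · intro x _ y _ h
        exact ZMod.val_injective k h
    have hmult : ((range k).filter (fun j => j % 4 = 3)).card = k / 4 := by
      have heq : ((range k).filter (fun j => j % 4 = 3)) =
          ((range k).filter (fun j => 4 ∣ j + 1)) := by
        apply filter_congr
        intro j _
        constructor <;> intro h <;> omega
      rw [heq, Nat.card_multiples]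
    have hB : 3 * ((range k).filter (fun j => j % 4 = 3 ∨ j = k - 1)).card ≤ k := by
      by_cases h0 : k % 4 = 0
      · have heq : ((range k).filter (fun j => j % 4 = 3 ∨ j = k - 1)) =
            ((range k).filter (fun j => j % 4 = 3)) := by
          apply filter_congr
          intro j hj
          simp only [mem_range] at hj
          constructor <;> intro h <;> omega
        rw [heq, hmult]; omega
      · have hsub2 : ((range k).filter (fun j => j % 4 = 3 ∨ j = k - 1)) ⊆
            ((range k).filter (fun j => j % 4 = 3)) ∪ {k - 1} := by
          intro j hj
          simp only [mem_filter, mem_range] at hj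
          simp only [mem_union, mem_filter, mem_range, mem_singleton]
          omega
        have h1 := card_le_card hsub2
        have h2 := card_union_le ((range k).filter (fun j => j % 4 = 3)) ({k - 1} : Finset ℕ)
        simp only [card_singleton] at h2
        rw [hmult] at h2
        omega
    have hdk : 3 * d ≤ k := by
      have := disc_le_bad k r LA d hd w
      omega
    have hdr : (d : ℝ) ≤ (k : ℝ) / 3 := by
      have : (3 : ℝ) * (d : ℝ) ≤ (k : ℝ) := by exact_mod_cast hdk
      linarith
    refine le_trans ?_ (le_max_right _ _)
    linarith
  · -- no directed walk of length 3: count arcs, use the left branch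
    push_neg at h3
    obtain ⟨⟨a0, b0⟩, hab0⟩ := hLne
    have hr : 0 < r := a0.pos
    set O := univ.filter (fun v : Fin r => ∃ u, (v, u) ∈ LA) with hO
    set I := univ.filter (fun v : Fin r => ∃ u, (u, v) ∈ LA) with hI
    have hsub : LA ⊆ ((O \ I) ×ˢ I) ∪ (O ×ˢ (I \ O)) := by
      rintro ⟨x, y⟩ hxy
      have hxO : x ∈ O := by simp only [hO, mem_filter, mem_univ, true_and]; exact ⟨y, hxy⟩
      have hyI : y ∈ I := by simp only [hI, mem_filter, mem_univ, true_and]; exact ⟨x, hxy⟩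
      simp only [mem_union, mem_product, mem_sdiff]
      by_cases hxI : x ∈ I
      · by_cases hyO : y ∈ O
        · exfalso
          simp only [hI, mem_filter, mem_univ, true_and] at hxI
          simp only [hO, mem_filter, mem_univ, true_and] at hyO
          obtain ⟨z, hz⟩ := hxI
          obtain ⟨t, ht⟩ := hyO
          exact h3 z x y t hz hxy ht
        · exact Or.inr ⟨hxO, hyI, hyO⟩
      · exact Or.inl ⟨⟨hxO, hxI⟩, hyI⟩
    have hinter : (((O \ I) ×ˢ I) ∩ (O ×ˢ (I \ O))) = (O \ I) ×ˢ (I \ O) := by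
      ext ⟨x, y⟩
      simp only [mem_inter, mem_product, mem_sdiff]
      tauto
    have e1 := card_union_add_card_inter ((O \ I) ×ˢ I) (O ×ˢ (I \ O))
    rw [hinter] at e1
    have hLAle : LA.card ≤ (((O \ I) ×ˢ I) ∪ (O ×ˢ (I \ O))).card := card_le_card hsub
    have hcp : ∀ (s t : Finset (Fin r)), (s ×ˢ t).card = s.card * t.card :=
      fun s t => card_product s t
    rw [hcp, hcp, hcp] at e1
    have hOc : (O \ I).card + (O ∩ I).card = O.card := card_sdiff_add_card_inter O I
    have hIc : (I \ O).card + (O ∩ I).card = I.card := by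
      rw [inter_comm]; exact card_sdiff_add_card_inter I O
    have hun : (O ∪ I).card + (O ∩ I).card = O.card + I.card := card_union_add_card_inter O I
    have hru : (O ∪ I).card ≤ r := by
      have := card_le_univ (O ∪ I)
      simpa using this
    set p := (O \ I).card
    set q := (I \ O).card
    set m := (O ∩ I).card
    have hpqm : p + q + m ≤ r := by omega
    have hIcard : I.card = q + m := by omega
    have hOcard : O.card = p + m := by omega
    rw [hIcard, hOcard] at e1
    have hLA2 : LA.card ≤ p * q + p * m + m * q := by nlinarith
    have hkey : 3 * LA.card ≤ r ^ 2 := by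
      nlinarith [two_mul_le_add_sq p q, two_mul_le_add_sq p m, two_mul_le_add_sq q m,
        Nat.mul_le_mul hpqm hpqm]
    have hrr : (0 : ℝ) < (r : ℝ) ^ 2 := by positivity
    have hfrac : (LA.card : ℝ) / (r : ℝ) ^ 2 ≤ 1 / 3 := by
      rw [div_le_div_iff₀ hrr (by norm_num)]
      have : (3 : ℝ) * (LA.card : ℝ) ≤ ((r : ℝ)) ^ 2 := by exact_mod_cast hkey
      linarith
    refine le_trans ?_ (le_max_left _ _)
    have hk0 : (0 : ℝ) ≤ (k : ℝ) := by positivity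
    have h23 : (2 / 3 : ℝ) ≤ 1 - (LA.card : ℝ) / (r : ℝ) ^ 2 := by linarith
    have := mul_le_mul_of_nonneg_left h23 hk0
    linarith
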